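/- For r+1 variables x_1, ..., x_{r+1} (all distinct), the identity ∑_{i=1}^{r+1} ∏_{j ≠ i} (t x_i - x_j)/(x_i - x_j) = 1 + t + t^2 + ... + t^r holds. -/
import Mathlib


open Finset Polynomial

/-- For pairwise distinct elements `x_1, …, x_{r+1}` of a field and any `t`,
`∑_{i=1}^{r+1} ∏_{j ≠ i} (t x_i - x_j)/(x_i - x_j) = 1 + t + t² + ⋯ + t^r`. -/
theorem sum_prod_ratio_eq_tInt (F : Type*) [Field F] (r : ℕ)
    (x : Fin (r + 1) → F) (hx : Function.Injective x) (t : F) :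
    ∑ i : Fin (r + 1), ∏ j ∈ Finset.univ.erase i, (t * x i - x j) / (x i - x j)
      = ∑ k ∈ Finset.range (r + 1), t ^ k := by
  classical
  have hinj : Set.InjOn x (Finset.univ : Finset (Fin (r + 1))) := hx.injOn
  have hcard : #(Finset.univ : Finset (Fin (r + 1))) = r + 1 := by simp
  -- Step 1: each summand is the Lagrange basis polynomial evaluated at `t * x i`.
  have h1 : ∀ i : Fin (r + 1),
      ∏ j ∈ Finset.univ.erase i, (t * x i - x j) / (x i - x j)
        = (Lagrange.basis Finset.univ x i).eval (t * x i) := by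
    intro i
    rw [Lagrange.basis, Polynomial.eval_prod]
    refine Finset.prod_congr rfl fun j _ => ?_
    simp [Lagrange.basisDivisor, div_eq_mul_inv, mul_comm]
  -- Step 2: for each `k ≤ r`, `∑ i, (basis i).coeff k * (x i)^k = 1`.
  have h2 : ∀ k ∈ Finset.range (r + 1),
      ∑ i : Fin (r + 1), (Lagrange.basis Finset.univ x i).coeff k * x i ^ k = 1 := by
    intro k hk
    rw [Finset.mem_range] at hk
    have hXk : (X ^ k : F[X]) =
        Lagrange.interpolate Finset.univ x (fun i => x i ^ k) := by
      have := Lagrange.eq_interpolate (f := (X ^ k : F[X])) hinj (by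
        rw [degree_X_pow, hcard]
        exact_mod_cast hk)
      simpa using this
    have := congrArg (fun p : F[X] => p.coeff k) hXk
    simp only [coeff_X_pow, eq_self_iff_true, if_true, Lagrange.interpolate_apply,
      Polynomial.finset_sum_coeff, Polynomial.coeff_C_mul] at this
    simpa [mul_comm] using this.symm
  -- Step 3: expand the evaluations and swap the order of summation.
  have h3 : ∀ i : Fin (r + 1),
      (Lagrange.basis Finset.univ x i).eval (t * x i)
        = ∑ k ∈ Finset.range (r + 1),
            (Lagrange.basis Finset.univ x i).coeff k * (t * x i) ^ k := by
    intro i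
    refine Polynomial.eval_eq_sum_range' ?_ _
    rw [Lagrange.natDegree_basis hinj (Finset.mem_univ i), hcard]
    omega
  calc ∑ i : Fin (r + 1), ∏ j ∈ Finset.univ.erase i, (t * x i - x j) / (x i - x j)
      = ∑ i : Fin (r + 1), ∑ k ∈ Finset.range (r + 1),
          (Lagrange.basis Finset.univ x i).coeff k * (t * x i) ^ k := by
        exact Finset.sum_congr rfl fun i _ => (h1 i).trans (h3 i)
    _ = ∑ k ∈ Finset.range (r + 1), ∑ i : Fin (r + 1),
          (Lagrange.basis Finset.univ x i).coeff k * (t * x i) ^ k :=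
        Finset.sum_comm
    _ = ∑ k ∈ Finset.range (r + 1),
          (∑ i : Fin (r + 1), (Lagrange.basis Finset.univ x i).coeff k * x i ^ k) * t ^ k := by
        refine Finset.sum_congr rfl fun k _ => ?_
        rw [Finset.sum_mul]
        exact Finset.sum_congr rfl fun i _ => by ring
    _ = ∑ k ∈ Finset.range (r + 1), t ^ k := by
        refine Finset.sum_congr rfl fun k hk => ?_
        rw [h2 k hk, one_mul]
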